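/- Let L, R > 0 and define f : ℝ² → ℝ by f(x,y) = R/2 if x < y − √(R/L); f(x,y) = −(L/2)(x−y)² − √(LR)(x−y) if y − √(R/L) ≤ x < y; f(x,y) = (L/2)(x−y)² − √(LR)(x−y) if y ≤ x < y + √(R/L); and f(x,y) = −R/2 if x ≥ y + √(R/L). Then f is differentiable on ℝ², its saddle gradient F := (∂f/∂x, −∂f/∂y) satisfies F(x,y) = (−√(LR), −√(LR)) whenever x = y, and consequently every sequence {z_k}_{k≥0} ⊂ ℝ² with z₀ = (0,0) and z_k ∈ z₀ + span{F z₀, F z₁, …, F z_k} for all k ≥ 0 satisfies ‖F z_k‖² = 2LR for all k ≥ 0. -/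

import Mathlib

private lemma hasDerivAt_glue {f f1 f2 : ℝ → ℝ} {a d : ℝ}
    (h1 : HasDerivAt f1 d a) (h2 : HasDerivAt f2 d a)
    (e1 : ∀ᶠ t in nhdsWithin a (Set.Iic a), f t = f1 t)
    (e2 : ∀ᶠ t in nhdsWithin a (Set.Ici a), f t = f2 t)
    (ea1 : f a = f1 a) (ea2 : f a = f2 a) : HasDerivAt f d a := by
  have H1 : HasDerivWithinAt f d (Set.Iic a) a :=
    (h1.hasDerivWithinAt).congr_of_eventuallyEq e1 ea1
  have H2 : HasDerivWithinAt f d (Set.Ici a) a :=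
    (h2.hasDerivWithinAt).congr_of_eventuallyEq e2 ea2
  have h := H1.union H2
  rwa [Set.Iic_union_Ici, hasDerivWithinAt_univ] at h

private noncomputable def gfun (L R s c : ℝ) : ℝ → ℝ := fun t =>
  if t < -s then R / 2
  else if t < 0 then -(L / 2) * t ^ 2 - c * t
  else if t < s then (L / 2) * t ^ 2 - c * t
  else -R / 2

private noncomputable def Gfun (L s c : ℝ) : ℝ → ℝ := fun t =>
  if t ≤ -s then 0
  else if t ≤ 0 then -(L * t) - c
  else if t ≤ s then L * t - c
  else 0

private lemma gfun_hasDerivAt (L R s c : ℝ) (hs : 0 < s)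
    (hLs : L * s = c) (hcs : c * s = R) :
    ∀ t : ℝ, HasDerivAt (gfun L R s c) (Gfun L s c t) t := by
  have hm : ∀ x : ℝ, HasDerivAt (fun t => -(L / 2) * t ^ 2 - c * t) (-(L * x) - c) x := by
    intro x
    have h := ((hasDerivAt_pow 2 x).const_mul (-(L / 2))).sub
      ((hasDerivAt_id x).const_mul c)
    refine h.congr_deriv ?_
    push_cast
    ring
  have hr : ∀ x : ℝ, HasDerivAt (fun t => (L / 2) * t ^ 2 - c * t) (L * x - c) x := by
    intro x
    have h := ((hasDerivAt_pow 2 x).const_mul (L / 2)).sub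
      ((hasDerivAt_id x).const_mul c)
    refine h.congr_deriv ?_
    push_cast
    ring
  have hval : -(L / 2) * (-s) ^ 2 - c * (-s) = R / 2 := by nlinarith
  have hval2 : (L / 2) * s ^ 2 - c * s = -R / 2 := by nlinarith
  have hgns : gfun L R s c (-s) = R / 2 := by
    rw [gfun, if_neg (lt_irrefl _), if_pos (by linarith : -s < (0:ℝ))]
    exact hval
  have hg0 : gfun L R s c 0 = 0 := by
    rw [gfun, if_neg (by simp; linarith : ¬ ((0:ℝ) < -s)), if_neg (lt_irrefl _), if_pos hs]
    ring
  have hgs : gfun L R s c s = -R / 2 := by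
    rw [gfun, if_neg (by intro h; linarith), if_neg (by intro h; linarith),
      if_neg (lt_irrefl _)]
  intro t
  rcases lt_trichotomy t (-s) with h1 | h1 | h1
  · have hGt : Gfun L s c t = 0 := if_pos h1.le
    rw [hGt]
    refine (hasDerivAt_const t (R / 2)).congr_of_eventuallyEq ?_
    filter_upwards [Iio_mem_nhds h1] with u hu
    rw [Set.mem_Iio] at hu
    exact if_pos hu
  · subst h1
    have hGt : Gfun L s c (-s) = 0 := if_pos le_rfl
    rw [hGt]
    have h2 : HasDerivAt (fun t => -(L / 2) * t ^ 2 - c * t) 0 (-s) := by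
      have h := hm (-s)
      rwa [show -(L * -s) - c = 0 by rw [← hLs]; ring] at h
    refine hasDerivAt_glue (hasDerivAt_const (-s) (R / 2)) h2 ?_ ?_ hgns (by rw [hgns, hval])
    · filter_upwards [self_mem_nhdsWithin] with u hu
      rw [Set.mem_Iic] at hu
      rcases lt_or_eq_of_le hu with h | h
      · exact if_pos h
      · rw [h]; exact hgns
    · filter_upwards [self_mem_nhdsWithin,
        mem_nhdsWithin_of_mem_nhds (Iio_mem_nhds (by linarith : -s < 0))] with u hu hu'
      rw [Set.mem_Ici] at hu; rw [Set.mem_Iio] at hu'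
      rw [gfun, if_neg (not_lt.2 hu), if_pos hu']
  · rcases lt_trichotomy t 0 with h2 | h2 | h2
    · have hGt : Gfun L s c t = -(L * t) - c := by
        rw [Gfun, if_neg (not_le.2 h1), if_pos h2.le]
      rw [hGt]
      refine (hm t).congr_of_eventuallyEq ?_
      filter_upwards [Ioo_mem_nhds h1 h2] with u hu
      obtain ⟨hu1, hu2⟩ := hu
      rw [gfun, if_neg (not_lt.2 hu1.le), if_pos hu2]
    · subst h2
      have hGt : Gfun L s c 0 = -c := by
        rw [Gfun, if_neg (not_le.2 (by linarith : -s < 0)), if_pos le_rfl]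
        ring
      rw [hGt]
      have hm0 : HasDerivAt (fun t => -(L / 2) * t ^ 2 - c * t) (-c) 0 := by
        have h := hm 0; rwa [show -(L * 0) - c = -c by ring] at h
      have hr0 : HasDerivAt (fun t => (L / 2) * t ^ 2 - c * t) (-c) 0 := by
        have h := hr 0; rwa [show L * 0 - c = -c by ring] at h
      refine hasDerivAt_glue hm0 hr0 ?_ ?_ (by rw [hg0]; ring) (by rw [hg0]; ring)
      · filter_upwards [self_mem_nhdsWithin,
          mem_nhdsWithin_of_mem_nhds (Ioi_mem_nhds (by linarith : -s < 0))] with u hu hu'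
        rw [Set.mem_Iic] at hu; rw [Set.mem_Ioi] at hu'
        rcases lt_or_eq_of_le hu with h | h
        · rw [gfun, if_neg (not_lt.2 hu'.le), if_pos h]
        · rw [h, hg0]; ring
      · filter_upwards [self_mem_nhdsWithin,
          mem_nhdsWithin_of_mem_nhds (Iio_mem_nhds hs)] with u hu hu'
        rw [Set.mem_Ici] at hu; rw [Set.mem_Iio] at hu'
        rw [gfun, if_neg (by intro h; linarith), if_neg (not_lt.2 hu), if_pos hu']
    · rcases lt_trichotomy t s with h3 | h3 | h3
      · have hGt : Gfun L s c t = L * t - c := by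
          rw [Gfun, if_neg (by intro h; linarith), if_neg (not_le.2 h2), if_pos h3.le]
        rw [hGt]
        refine (hr t).congr_of_eventuallyEq ?_
        filter_upwards [Ioo_mem_nhds h2 h3] with u hu
        obtain ⟨hu1, hu2⟩ := hu
        rw [gfun, if_neg (by intro h; linarith), if_neg (not_lt.2 hu1.le), if_pos hu2]
      · rw [h3]
        have hGt : Gfun L s c s = 0 := by
          rw [Gfun, if_neg (by intro h; linarith), if_neg (not_le.2 hs), if_pos le_rfl, hLs]
          ring
        rw [hGt]
        have hrs : HasDerivAt (fun t => (L / 2) * t ^ 2 - c * t) 0 s := by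
          have h := hr s; rwa [show L * s - c = 0 by rw [hLs]; ring] at h
        refine hasDerivAt_glue hrs (hasDerivAt_const s (-R / 2)) ?_ ?_
          (by rw [hgs, hval2]) hgs
        · filter_upwards [self_mem_nhdsWithin,
            mem_nhdsWithin_of_mem_nhds (Ioi_mem_nhds hs)] with u hu hu'
          rw [Set.mem_Iic] at hu; rw [Set.mem_Ioi] at hu'
          rcases lt_or_eq_of_le hu with h | h
          · rw [gfun, if_neg (by intro hh; linarith), if_neg (not_lt.2 hu'.le), if_pos h]
          · rw [h, hgs, hval2]
        · filter_upwards [self_mem_nhdsWithin] with u hu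
          rw [Set.mem_Ici] at hu
          rw [gfun, if_neg (by intro hh; linarith), if_neg (by intro hh; linarith),
            if_neg (not_lt.2 hu)]
      · have hGt : Gfun L s c t = 0 := by
          rw [Gfun, if_neg (by intro h; linarith), if_neg (by intro h; linarith),
            if_neg (not_le.2 h3)]
        rw [hGt]
        refine (hasDerivAt_const t (-R / 2)).congr_of_eventuallyEq ?_
        filter_upwards [Ioi_mem_nhds h3] with u hu
        rw [Set.mem_Ioi] at hu
        rw [gfun, if_neg (by intro h; linarith), if_neg (by intro h; linarith),
          if_neg (not_lt.2 hu.le)]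

open scoped RealInnerProductSpace

private lemma Gfun_diag (L s c : ℝ) (hs : 0 < s) : Gfun L s c 0 = -c := by
  rw [Gfun, if_neg (not_le.2 (by linarith : -s < 0)), if_pos le_rfl]
  ring

/-- **A smooth worst-case example for first-order methods** (Lemma 3 of the paper).
The piecewise function `f` below is differentiable, its saddle gradient
`F = (∂f/∂x, -∂f/∂y)` equals `(-√(LR), -√(LR))` on the diagonal `x = y`, and
hence every span-respecting first-order method started at `(0,0)` has
`‖F z_k‖² = 2LR` for all `k`. -/
theorem smooth_worst_case_example
    (L R : ℝ) (hL : 0 < L) (hR : 0 < R)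
    (f : EuclideanSpace ℝ (Fin 2) → ℝ)
    (hf : ∀ p : EuclideanSpace ℝ (Fin 2),
      f p = if p 0 < p 1 - Real.sqrt (R / L) then R / 2
        else if p 0 < p 1 then
          -(L / 2) * (p 0 - p 1) ^ 2 - Real.sqrt (L * R) * (p 0 - p 1)
        else if p 0 < p 1 + Real.sqrt (R / L) then
          (L / 2) * (p 0 - p 1) ^ 2 - Real.sqrt (L * R) * (p 0 - p 1)
        else -R / 2)
    (F : EuclideanSpace ℝ (Fin 2) → EuclideanSpace ℝ (Fin 2))
    (hF0 : ∀ p : EuclideanSpace ℝ (Fin 2),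
      F p 0 = fderiv ℝ f p (EuclideanSpace.single 0 1))
    (hF1 : ∀ p : EuclideanSpace ℝ (Fin 2),
      F p 1 = -(fderiv ℝ f p (EuclideanSpace.single 1 1))) :
    Differentiable ℝ f ∧
    (∀ p : EuclideanSpace ℝ (Fin 2), p 0 = p 1 →
      F p 0 = -Real.sqrt (L * R) ∧ F p 1 = -Real.sqrt (L * R)) ∧
    (∀ z : ℕ → EuclideanSpace ℝ (Fin 2),
      z 0 = 0 →
      (∀ k : ℕ, z k - z 0 ∈
        Submodule.span ℝ {v : EuclideanSpace ℝ (Fin 2) | ∃ i ≤ k, v = F (z i)}) →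
      ∀ k : ℕ, ‖F (z k)‖ ^ 2 = 2 * L * R) := by
  have hs : 0 < Real.sqrt (R / L) := Real.sqrt_pos.2 (div_pos hR hL)
  have hc : 0 < Real.sqrt (L * R) := Real.sqrt_pos.2 (mul_pos hL hR)
  have hs2' : L * Real.sqrt (R / L) ^ 2 = R := by
    rw [Real.sq_sqrt (div_pos hR hL).le]; field_simp
  have hc2 : Real.sqrt (L * R) ^ 2 = L * R := Real.sq_sqrt (mul_pos hL hR).le
  have hLs : L * Real.sqrt (R / L) = Real.sqrt (L * R) := by
    rw [show L = Real.sqrt (L ^ 2) by rw [Real.sqrt_sq hL.le],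
      ← Real.sqrt_mul (by positivity)]
    congr 1
    field_simp
    rw [Real.sq_sqrt (sq_nonneg L)]
  have hcs : Real.sqrt (L * R) * Real.sqrt (R / L) = R := by
    rw [← hLs]; nlinarith
  set s : ℝ := Real.sqrt (R / L)
  set c : ℝ := Real.sqrt (L * R)
  have hg := gfun_hasDerivAt L R s c hs hLs hcs
  -- the linear functional p ↦ p 0 - p 1
  set ℓ : EuclideanSpace ℝ (Fin 2) →L[ℝ] ℝ :=
    EuclideanSpace.proj (0 : Fin 2) - EuclideanSpace.proj (1 : Fin 2) with hℓ_def
  have hℓ : ∀ p : EuclideanSpace ℝ (Fin 2), ℓ p = p 0 - p 1 := by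
    intro p
    simp [hℓ_def]
  have hfg : ∀ p : EuclideanSpace ℝ (Fin 2), f p = gfun L R s c (ℓ p) := by
    intro p
    rw [hf p, hℓ p, gfun]
    split_ifs <;> first | rfl | ring1 | (exfalso; linarith)
  have hdiff : ∀ p : EuclideanSpace ℝ (Fin 2),
      HasFDerivAt f (Gfun L s c (ℓ p) • (ℓ : EuclideanSpace ℝ (Fin 2) →L[ℝ] ℝ)) p := by
    intro p
    have h := (hg (ℓ p)).comp_hasFDerivAt p ℓ.hasFDerivAt
    refine h.congr_of_eventuallyEq ?_
    filter_upwards with q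
    exact hfg q
  have hDiff : Differentiable ℝ f := fun p => (hdiff p).differentiableAt
  have hℓ0 : ℓ (EuclideanSpace.single (0 : Fin 2) (1:ℝ)) = 1 := by
    rw [hℓ]; simp [EuclideanSpace.single_apply]
  have hℓ1 : ℓ (EuclideanSpace.single (1 : Fin 2) (1:ℝ)) = -1 := by
    rw [hℓ]; simp [EuclideanSpace.single_apply]
  have hF0' : ∀ p, F p 0 = Gfun L s c (p 0 - p 1) := by
    intro p
    rw [hF0 p, (hdiff p).fderiv]
    simp only [ContinuousLinearMap.smul_apply, smul_eq_mul]
    rw [hℓ0, hℓ p]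
    ring
  have hF1' : ∀ p, F p 1 = Gfun L s c (p 0 - p 1) := by
    intro p
    rw [hF1 p, (hdiff p).fderiv]
    simp only [ContinuousLinearMap.smul_apply, smul_eq_mul]
    rw [hℓ1, hℓ p]
    ring
  have hdiag : ∀ p : EuclideanSpace ℝ (Fin 2), p 0 = p 1 →
      F p 0 = -c ∧ F p 1 = -c := by
    intro p hp
    rw [hF0' p, hF1' p, hp, sub_self, Gfun_diag L s c hs]
    exact ⟨rfl, rfl⟩
  refine ⟨hDiff, hdiag, ?_⟩
  intro z hz0 hspan k
  have hker : ∀ p : EuclideanSpace ℝ (Fin 2), F p ∈ LinearMap.ker (ℓ : EuclideanSpace ℝ (Fin 2) →ₗ[ℝ] ℝ) := by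
    intro p
    rw [LinearMap.mem_ker, ContinuousLinearMap.coe_coe, hℓ, hF0' p, hF1' p, sub_self]
  have hmem : z k ∈ LinearMap.ker (ℓ : EuclideanSpace ℝ (Fin 2) →ₗ[ℝ] ℝ) := by
    have h := hspan k
    rw [hz0, sub_zero] at h
    refine Submodule.span_le.2 ?_ h
    rintro v ⟨i, _, rfl⟩
    exact hker (z i)
  have hdiagz : z k 0 = z k 1 := by
    have h := hmem
    rw [LinearMap.mem_ker, ContinuousLinearMap.coe_coe, hℓ] at h
    linarith
  obtain ⟨h0, h1⟩ := hdiag (z k) hdiagz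
  have hnorm : ‖F (z k)‖ ^ 2 = ∑ i : Fin 2, ‖F (z k) i‖ ^ 2 := by
    rw [EuclideanSpace.norm_eq, Real.sq_sqrt (by positivity)]
  rw [hnorm, Fin.sum_univ_two, h0, h1, Real.norm_eq_abs, sq_abs]
  nlinarith
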